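/- For an operator f between lattices, the dcpo-lifted extension f^ℱ-bar on the canonical extensions agrees with the sigma-extension: f^ℱ-bar = f^σ, and it is Scott-continuous. -/
import Mathlib


section Pres
variable {P : Type*} [Preorder P]

/-- A `C`-ideal: downward closed and closed under covers. -/
def IsCIdeal (C : P → Set P → Prop) (X : Set P) : Prop :=
  (∀ x ∈ X, ∀ y, y ≤ x → y ∈ X) ∧ ∀ x U, C x U → U ⊆ X → x ∈ X

/-- The collection of `C`-ideals, ordered by inclusion. -/
abbrev CIdl (C : P → Set P → Prop) : Type _ := {X : Set P // IsCIdeal C X}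

/-- The `C`-ideal generated by a set. -/
def genC (C : P → Set P → Prop) (S : Set P) : Set P := ⋂₀ {X | IsCIdeal C X ∧ S ⊆ X}

lemma isCIdeal_sInter (C : P → Set P → Prop) (T : Set (Set P))
    (hT : ∀ X ∈ T, IsCIdeal C X) : IsCIdeal C (⋂₀ T) := by
  refine ⟨?_, ?_⟩
  · intro x hx y hyx
    rw [Set.mem_sInter] at *
    intro X hX
    exact (hT X hX).1 x (hx X hX) y hyx
  · intro x U hU hsub
    rw [Set.mem_sInter]
    intro X hX
    exact (hT X hX).2 x U hU fun u hu => Set.mem_sInter.mp (hsub hu) X hX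

lemma isCIdeal_genC (C : P → Set P → Prop) (S : Set P) : IsCIdeal C (genC C S) :=
  isCIdeal_sInter C _ fun _ hX => hX.1

lemma subset_genC (C : P → Set P → Prop) (S : Set P) : S ⊆ genC C S :=
  fun _ hs => Set.mem_sInter.mpr fun _ hX => hX.2 hs

noncomputable instance instInfCIdl (C : P → Set P → Prop) : InfSet (CIdl C) :=
  ⟨fun S => ⟨⋂₀ (Subtype.val '' S),
    isCIdeal_sInter C _ (by rintro X ⟨Y, _, rfl⟩; exact Y.2)⟩⟩

noncomputable instance instCompleteLatticeCIdl (C : P → Set P → Prop) :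
    CompleteLattice (CIdl C) :=
  completeLatticeOfInf _ (by
    intro S
    constructor
    · intro X hX
      exact fun a ha => Set.mem_sInter.mp ha X.1 ⟨X, hX, rfl⟩
    · intro Y hY a ha
      refine Set.mem_sInter.mpr ?_
      rintro Z ⟨X, hX, rfl⟩
      exact hY hX ha)

/-- The natural map `x ↦ ⟨x⟩` from a presentation into its `C`-ideals. -/
def etaC (C : P → Set P → Prop) (x : P) : CIdl C := ⟨genC C {x}, isCIdeal_genC C _⟩

/-- The free dcpo over a dcpo presentation: the least family of `C`-ideals containing
all principal `C`-ideals and closed under directed joins. -/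
def OverC (C : P → Set P → Prop) : Set (CIdl C) :=
  ⋂₀ {Y | (∀ x, etaC C x ∈ Y) ∧
      ∀ S ⊆ Y, S.Nonempty → DirectedOn (· ≤ ·) S → sSup S ∈ Y}

end Pres

section Filt
variable {A : Type*}

/-- `F` is a filter: nonempty, upward closed, downward directed. -/
def IsFilt [Preorder A] (F : Set A) : Prop :=
  F.Nonempty ∧ (∀ a ∈ F, ∀ b, a ≤ b → b ∈ F) ∧
    ∀ a ∈ F, ∀ b ∈ F, ∃ c ∈ F, c ≤ a ∧ c ≤ b

/-- `I` is an ideal: nonempty, downward closed, upward directed. -/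
def IsIdl [Preorder A] (I : Set A) : Prop :=
  I.Nonempty ∧ (∀ a ∈ I, ∀ b, b ≤ a → b ∈ I) ∧
    ∀ a ∈ I, ∀ b ∈ I, ∃ c ∈ I, a ≤ c ∧ b ≤ c

/-- The free co-directed meet completion of `A`: filters ordered by reverse inclusion. -/
def FComp (A : Type u) [Preorder A] : Type u := {F : Set A // IsFilt F}

instance [Preorder A] : PartialOrder (FComp A) where
  le x y := y.1 ⊆ x.1
  le_refl x := subset_rfl
  le_trans x y z h1 h2 := Set.Subset.trans h2 h1
  le_antisymm x y h1 h2 := Subtype.ext (subset_antisymm h2 h1)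

/-- The embedding `↑ : A → ℱ(A)` sending `a` to the principal filter. -/
def pf [Preorder A] (a : A) : FComp A :=
  ⟨{b | a ≤ b}, ⟨a, le_refl a⟩, fun x hx b hb => le_trans hx hb,
    fun x hx y hy => ⟨a, le_refl a, hx, hy⟩⟩

noncomputable instance [Lattice A] [BoundedOrder A] : InfSet (FComp A) :=
  ⟨fun S => ⟨⋂₀ {F | IsFilt F ∧ ∀ x ∈ S, x.1 ⊆ F}, by
    refine ⟨⟨⊤, ?_⟩, ?_, ?_⟩
    · refine Set.mem_sInter.mpr ?_
      rintro F ⟨⟨⟨w, hw⟩, hup, _⟩, _⟩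
      exact hup w hw ⊤ le_top
    · intro a ha b hab
      refine Set.mem_sInter.mpr fun F hF => ?_
      exact hF.1.2.1 a (Set.mem_sInter.mp ha F hF) b hab
    · intro a ha b hb
      refine ⟨a ⊓ b, ?_, inf_le_left, inf_le_right⟩
      refine Set.mem_sInter.mpr fun F hF => ?_
      obtain ⟨c, hc, hca, hcb⟩ :=
        hF.1.2.2 a (Set.mem_sInter.mp ha F hF) b (Set.mem_sInter.mp hb F hF)
      exact hF.1.2.1 c hc (a ⊓ b) (le_inf hca hcb)⟩⟩

noncomputable instance [Lattice A] [BoundedOrder A] : CompleteLattice (FComp A) :=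
  completeLatticeOfInf _ (by
    intro S
    constructor
    · intro x hx
      show x.1 ⊆ (sInf S).1
      intro a ha
      exact Set.mem_sInter.mpr fun F hF => hF.2 x hx ha
    · intro y hY
      show (sInf S).1 ⊆ y.1
      intro a ha
      exact Set.mem_sInter.mp ha y.1 ⟨y.2, fun x hx => hY hx⟩)

/-- The lifting of a monotone map to the filter completions. -/
def liftF {ι : Type*} {A : ι → Type*} {B : Type*} [∀ i, Preorder (A i)] [Preorder B]
    (f : (∀ i, A i) → B) (hf : Monotone f) (x : ∀ i, FComp (A i)) : FComp B :=
  ⟨{b | ∃ a : ∀ i, A i, (∀ i, a i ∈ (x i).1) ∧ f a ≤ b}, by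
    refine ⟨?_, ?_, ?_⟩
    · exact ⟨f (fun i => ((x i).2.1).choose), fun i => ((x i).2.1).choose,
        fun i => ((x i).2.1).choose_spec, le_rfl⟩
    · rintro b ⟨a, ha, hab⟩ c hbc
      exact ⟨a, ha, hab.trans hbc⟩
    · rintro b ⟨a1, ha1, h1⟩ c ⟨a2, ha2, h2⟩
      choose g hg hga1 hga2 using fun i => (x i).2.2.2 (a1 i) (ha1 i) (a2 i) (ha2 i)
      exact ⟨f g, ⟨g, hg, le_rfl⟩, (hf fun i => hga1 i).trans h1,
        (hf fun i => hga2 i).trans h2⟩⟩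

/-- The co-Scott continuous extension of binary join to the filter completion. -/
def supF [Lattice A] (x y : FComp A) : FComp A :=
  liftF (A := fun _ : Fin 2 => A) (fun a => a 0 ⊔ a 1)
    (fun _ _ hab => sup_le_sup (hab 0) (hab 1)) ![x, y]

/-- The co-Scott continuous extension of binary meet to the filter completion. -/
def infF [Lattice A] (x y : FComp A) : FComp A :=
  liftF (A := fun _ : Fin 2 => A) (fun a => a 0 ⊓ a 1)
    (fun _ _ hab => inf_le_inf (hab 0) (hab 1)) ![x, y]

/-- A map is co-Scott continuous if it preserves meets of nonempty co-directed sets. -/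
def CoScottCont {α β : Type*} [Preorder α] [Preorder β] (g : α → β) : Prop :=
  ∀ S : Set α, S.Nonempty → DirectedOn (· ≥ ·) S → ∀ x, IsGLB S x → IsGLB (g '' S) (g x)

/-- A map is Scott continuous if it preserves joins of nonempty directed sets. -/
def ScottContOn {α β : Type*} [Preorder α] [Preorder β] (T : Set α) (g : α → β) : Prop :=
  ∀ S ⊆ T, S.Nonempty → DirectedOn (· ≤ ·) S → ∀ x, IsLUB S x → IsLUB (g '' S) (g x)

/-- The covering relation `C_A` of the dcpo presentation `Δ(A)` on `ℱ(A)`. -/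
def covD [Preorder A] (x : FComp A) (U : Set (FComp A)) : Prop :=
  U.Nonempty ∧ DirectedOn (· ≤ ·) U ∧
    ∀ I : Set A, IsIdl I → (∀ x' ∈ U, ∃ a' ∈ I, x' ≤ pf a') → ∃ a ∈ I, x ≤ pf a

/-- `e : A → C` is a canonical extension: a dense and compact lattice completion. -/
def IsCanExt {A C : Type*} [Lattice A] [CompleteLattice C] (e : A → C) : Prop :=
  (∀ a b, e a ≤ e b ↔ a ≤ b) ∧
  (∀ a b, e (a ⊔ b) = e a ⊔ e b) ∧
  (∀ a b, e (a ⊓ b) = e a ⊓ e b) ∧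
  (∀ u v : C, ¬ u ≤ v → ∃ F I : Set A, IsFilt F ∧ IsIdl I ∧
    sInf (e '' F) ≤ u ∧ ¬ sInf (e '' F) ≤ v ∧ v ≤ sSup (e '' I) ∧ ¬ u ≤ sSup (e '' I)) ∧
  (∀ F I : Set A, IsFilt F → IsIdl I → sInf (e '' F) ≤ sSup (e '' I) →
    ∃ b ∈ F, ∃ a ∈ I, b ≤ a)

/-- `f` is an operator: it preserves binary joins in each coordinate. -/
def IsOperator {ι : Type*} [DecidableEq ι] {A : ι → Type*} {B : Type*}
    [∀ i, Lattice (A i)] [Lattice B] (f : (∀ i, A i) → B) : Prop :=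
  ∀ (a : ∀ i, A i) (i : ι) (b : A i),
    f (Function.update a i (a i ⊔ b)) = f a ⊔ f (Function.update a i b)

end Filt

section Terms

/-- Terms over a signature `Ω` with arities `ar`, in `n` variables. -/
inductive OTerm (Ω : Type*) (ar : Ω → ℕ) (n : ℕ) : Type _ where
  | var : Fin n → OTerm Ω ar n
  | op : (ω : Ω) → (Fin (ar ω) → OTerm Ω ar n) → OTerm Ω ar n

/-- Evaluation of a term under an interpretation of the operation symbols. -/
def evalT {Ω : Type*} {ar : Ω → ℕ} {n : ℕ} {A : Type*}
    (interp : ∀ ω, (Fin (ar ω) → A) → A) (v : Fin n → A) : OTerm Ω ar n → A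
  | .var i => v i
  | .op ω args => interp ω (fun j => evalT interp v (args j))

end Terms

/-- The dcpo-lifting `f^ℱ-bar` of the extension `f^ℱ` of `f` to the canonical extensions
(realized as the lattices of `C_A`-ideals). -/
def liftBar {n : ℕ} {A : Fin n → Type*} {B : Type*} [∀ i, Lattice (A i)]
    [∀ i, BoundedOrder (A i)] [Lattice B] [BoundedOrder B]
    (f : (∀ i, A i) → B) (hf : Monotone f)
    (X : ∀ i, CIdl (covD (A := A i))) : CIdl (covD (A := B)) :=
  ⟨genC (covD (A := B))
      {b | ∃ x : ∀ i, FComp (A i), (∀ i, x i ∈ (X i).1) ∧ b = liftF f hf x},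
    isCIdeal_genC _ _⟩

/-- The sigma-extension of `f`: defined on closed elements by meets of images and on
arbitrary elements by joins over closed tuples below. -/
noncomputable def fsigma {n : ℕ} {A : Fin n → Type*} {B : Type*} [∀ i, Lattice (A i)]
    [∀ i, BoundedOrder (A i)] [Lattice B] [BoundedOrder B]
    (f : (∀ i, A i) → B)
    (u : ∀ i, CIdl (covD (A := A i))) : CIdl (covD (A := B)) :=
  sSup {w | ∃ x : ∀ i, FComp (A i), (∀ i, etaC (covD (A := A i)) (x i) ≤ u i) ∧
    w = sInf {z | ∃ a : ∀ i, A i, (∀ i, x i ≤ pf (a i)) ∧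
      z = etaC (covD (A := B)) (pf (f a))}}

section Aux

lemma FComp.le_def' {A : Type*} [Preorder A] {x y : FComp A} : x ≤ y ↔ y.1 ⊆ x.1 := Iff.rfl

lemma le_pf_iff {A : Type*} [Preorder A] {x : FComp A} {a : A} : x ≤ pf a ↔ a ∈ x.1 := by
  constructor
  · intro h; exact h (le_refl a)
  · intro h b hb; exact x.2.2.1 a h b hb

lemma inf_mem_filt {A : Type*} [Lattice A] {F : Set A} (hF : IsFilt F) {a b : A}
    (ha : a ∈ F) (hb : b ∈ F) : a ⊓ b ∈ F := by
  obtain ⟨c, hc, hca, hcb⟩ := hF.2.2 a ha b hb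
  exact hF.2.1 c hc _ (le_inf hca hcb)

variable {P : Type*} [Preorder P]

lemma genC_min {C : P → Set P → Prop} {S X : Set P} (hX : IsCIdeal C X) (hSX : S ⊆ X) :
    genC C S ⊆ X := Set.sInter_subset_of_mem ⟨hX, hSX⟩

lemma cidl_le_iff {C : P → Set P → Prop} {X Y : CIdl C} : X ≤ Y ↔ X.1 ⊆ Y.1 := Iff.rfl

lemma etaC_le_iff {C : P → Set P → Prop} {p : P} {X : CIdl C} : etaC C p ≤ X ↔ p ∈ X.1 := by
  constructor
  · intro h; exact h (subset_genC _ _ rfl)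
  · intro h; exact genC_min X.2 (Set.singleton_subset_iff.mpr h)

lemma cidl_mem_sInf {C : P → Set P → Prop} {Z : Set (CIdl C)} {w : P} :
    w ∈ (sInf Z).1 ↔ ∀ z ∈ Z, w ∈ (z : CIdl C).1 := by
  constructor
  · intro h z hz
    exact (sInf_le hz : sInf Z ≤ z) h
  · intro h
    show w ∈ ⋂₀ (Subtype.val '' Z)
    rintro _ ⟨z, hz, rfl⟩
    exact h z hz

lemma cidl_sSup_coe {C : P → Set P → Prop} (W : Set (CIdl C)) :
    (sSup W).1 = genC C (⋃ w ∈ W, (w : CIdl C).1) := by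
  apply subset_antisymm
  · have h : sSup W ≤ ⟨genC C (⋃ w ∈ W, (w : CIdl C).1), isCIdeal_genC _ _⟩ :=
      sSup_le fun w hw => fun b hb => subset_genC _ _ (Set.mem_biUnion hw hb)
    exact h
  · exact genC_min (sSup W).2 (Set.iUnion₂_subset fun w hw => (le_sSup hw : w ≤ sSup W))

lemma etaC_coe {A : Type*} [Preorder A] (y : FComp A) :
    (etaC (covD (A := A)) y).1 = {w | w ≤ y} := by
  apply subset_antisymm
  · apply genC_min
    · constructor
      · intro w hw v hv
        exact le_trans hv hw
      · rintro w U ⟨hUne, hUdir, hU⟩ hUsub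
        show y.1 ⊆ w.1
        intro b hb
        obtain ⟨a, haI, hwa⟩ := hU {c | c ≤ b}
          ⟨⟨b, le_refl b⟩, fun c hc d hd => le_trans hd hc,
            fun c hc d hd => ⟨b, le_refl b, hc, hd⟩⟩
          (fun x' hx' => ⟨b, le_refl b, le_trans (hUsub hx') (le_pf_iff.mpr hb)⟩)
        exact w.2.2.1 a (le_pf_iff.mp hwa) b haI
    · exact Set.singleton_subset_iff.mpr (le_refl y)
  · intro w hw
    exact (isCIdeal_genC (covD (A := A)) {y}).1 y (subset_genC _ {y} rfl) w hw

end Aux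

section LiftAux

lemma update_le_update' {ι : Type*} [DecidableEq ι] {A : ι → Type*} [∀ i, Preorder (A i)]
    {k : ι} {a b : ∀ i, A i} (hab : ∀ i, i ≠ k → a i ≤ b i) {c d : A k} (h : c ≤ d) :
    ∀ i, Function.update a k c i ≤ Function.update b k d i := by
  intro i
  rcases eq_or_ne i k with rfl | hik
  · simpa using h
  · simp only [Function.update_of_ne hik]
    exact hab i hik

variable {n : ℕ} {A : Fin n → Type*} {B : Type*} [∀ i, Lattice (A i)]
  [∀ i, BoundedOrder (A i)] [Lattice B] [BoundedOrder B]
  (f : (∀ i, A i) → B) (hf : Monotone f)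

lemma liftF_mono {x y : ∀ i, FComp (A i)} (h : ∀ i, x i ≤ y i) :
    liftF f hf x ≤ liftF f hf y := by
  show (liftF f hf y).1 ⊆ (liftF f hf x).1
  rintro b ⟨a, ha, hab⟩
  exact ⟨a, fun i => h i (ha i), hab⟩

lemma liftF_le_pf {x : ∀ i, FComp (A i)} {a : ∀ i, A i} (ha : ∀ i, a i ∈ (x i).1) :
    liftF f hf x ≤ pf (f a) := le_pf_iff.mpr ⟨a, ha, le_refl _⟩

lemma le_liftF {x : ∀ i, FComp (A i)} {w : FComp B}
    (h : ∀ a : ∀ i, A i, (∀ i, a i ∈ (x i).1) → w ≤ pf (f a)) :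
    w ≤ liftF f hf x := by
  show (liftF f hf x).1 ⊆ w.1
  rintro b ⟨a, ha, hab⟩
  exact w.2.2.1 _ (le_pf_iff.mp (h a ha)) b hab

lemma covD_liftF (hop : IsOperator f) (x : ∀ i, FComp (A i)) (k : Fin n)
    {y : FComp (A k)} {U : Set (FComp (A k))} (hc : covD y U) :
    covD (liftF f hf (Function.update x k y))
      ((fun u' => liftF f hf (Function.update x k u')) '' U) := by
  obtain ⟨hUne, hUdir, hU⟩ := hc
  refine ⟨hUne.image _, ?_, ?_⟩
  · rintro _ ⟨u1, hu1, rfl⟩ _ ⟨u2, hu2, rfl⟩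
    obtain ⟨u3, hu3, h13, h23⟩ := hUdir u1 hu1 u2 hu2
    exact ⟨_, ⟨u3, hu3, rfl⟩,
      liftF_mono f hf (update_le_update' (fun i _ => le_refl _) h13),
      liftF_mono f hf (update_le_update' (fun i _ => le_refl _) h23)⟩
  · intro J hJ hUim
    set I : Set (A k) := {c | ∃ a : ∀ i, A i, (∀ j, j ≠ k → a j ∈ (x j).1) ∧
      f (Function.update a k c) ∈ J} with hIdef
    have extract : ∀ u' ∈ U, ∃ c ∈ I, u' ≤ pf c := by
      intro u' hu'
      obtain ⟨b', hb'J, hb'⟩ := hUim _ ⟨u', hu', rfl⟩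
      obtain ⟨a, ha, hab⟩ := le_pf_iff.mp hb'
      refine ⟨a k, ⟨a, fun j hj => ?_, ?_⟩, le_pf_iff.mpr ?_⟩
      · have := ha j; rwa [Function.update_of_ne hj] at this
      · rw [Function.update_eq_self]
        exact hJ.2.1 _ hb'J _ hab
      · have := ha k; rwa [Function.update_self] at this
    have hIidl : IsIdl I := by
      refine ⟨?_, ?_, ?_⟩
      · obtain ⟨u0, hu0⟩ := hUne
        obtain ⟨c, hc, _⟩ := extract u0 hu0
        exact ⟨c, hc⟩
      · rintro c ⟨a, ha, haJ⟩ c' hc'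
        exact ⟨a, ha, hJ.2.1 _ haJ _ (hf (update_le_update' (fun i _ => le_refl _) hc'))⟩
      · rintro c1 ⟨a1, ha1, ha1J⟩ c2 ⟨a2, ha2, ha2J⟩
        set a3 : ∀ i, A i := fun i => a1 i ⊓ a2 i with ha3def
        have ha3 : ∀ j, j ≠ k → a3 j ∈ (x j).1 := fun j hj =>
          inf_mem_filt (x j).2 (ha1 j hj) (ha2 j hj)
        have h1 : f (Function.update a3 k c1) ∈ J :=
          hJ.2.1 _ ha1J _ (hf (update_le_update' (fun i _ => inf_le_left) (le_refl c1)))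
        have h2 : f (Function.update a3 k c2) ∈ J :=
          hJ.2.1 _ ha2J _ (hf (update_le_update' (fun i _ => inf_le_right) (le_refl c2)))
        have hjoin : f (Function.update a3 k (c1 ⊔ c2)) =
            f (Function.update a3 k c1) ⊔ f (Function.update a3 k c2) := by
          have h := hop (Function.update a3 k c1) k c2
          simpa only [Function.update_self, Function.update_idem] using h
        obtain ⟨d, hd, hd1, hd2⟩ := hJ.2.2 _ h1 _ h2
        refine ⟨c1 ⊔ c2, ⟨a3, ha3, ?_⟩, le_sup_left, le_sup_right⟩
        rw [hjoin]
        exact hJ.2.1 _ hd _ (sup_le hd1 hd2)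
    obtain ⟨c, hcI, hyc⟩ := hU I hIidl extract
    obtain ⟨a, ha, haJ⟩ := hcI
    refine ⟨f (Function.update a k c), haJ,
      le_pf_iff.mpr ⟨Function.update a k c, ?_, le_refl _⟩⟩
    intro i
    rcases eq_or_ne i k with rfl | hik
    · simp only [Function.update_self]
      exact le_pf_iff.mp hyc
    · simp only [Function.update_of_ne hik]
      exact ha i hik

lemma liftBar_mono {u v : ∀ i, CIdl (covD (A := A i))} (h : u ≤ v) :
    liftBar f hf u ≤ liftBar f hf v := by
  show (liftBar f hf u).1 ⊆ (liftBar f hf v).1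
  apply genC_min (isCIdeal_genC _ _)
  rintro b ⟨x, hx, rfl⟩
  exact subset_genC _ _ ⟨x, fun i => h i (hx i), rfl⟩

end LiftAux

/-- for an operator `f` between lattices, the dcpo-lifted extension of `f^ℱ`
is Scott-continuous and agrees with the sigma-extension `f^σ`. -/
theorem statement18 {n : ℕ} {A : Fin n → Type*} {B : Type*}
    [∀ i, Lattice (A i)] [∀ i, BoundedOrder (A i)] [Lattice B] [BoundedOrder B]
    (f : (∀ i, A i) → B) (hf : Monotone f) (hop : IsOperator f) :
    (∀ S : Set (∀ i, CIdl (covD (A := A i))), S.Nonempty → DirectedOn (· ≤ ·) S →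
      liftBar f hf (sSup S) = sSup (liftBar f hf '' S)) ∧
    liftBar f hf = fsigma f := by
  constructor
  · intro S hSne hSdir
    apply le_antisymm
    · -- hard direction: liftBar (sSup S) ≤ sSup (liftBar '' S)
      set W := sSup (liftBar f hf '' S) with hW
      set T : ∀ i, Set (FComp (A i)) := fun i => ⋃ u ∈ S, (u i).1 with hT
      have hTsup : ∀ i, ((sSup S) i).1 = genC (covD (A := A i)) (T i) := by
        intro i
        apply subset_antisymm
        · have h : sSup S ≤ (fun i =>
              (⟨genC (covD (A := A i)) (T i), isCIdeal_genC _ _⟩ : CIdl _)) := by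
            apply sSup_le
            intro u hu i'
            intro b hb
            exact subset_genC _ _ (Set.mem_biUnion hu hb)
          exact h i
        · apply genC_min ((sSup S) i).2
          apply Set.iUnion₂_subset
          intro u hu
          exact fun b hb => (le_sSup hu : u ≤ sSup S) i hb
      have key : ∀ m : ℕ, ∀ x : ∀ i, FComp (A i),
          (∀ j : Fin n, (j : ℕ) < m → x j ∈ ((sSup S) j).1) →
          (∀ j : Fin n, m ≤ (j : ℕ) → x j ∈ T j) → liftF f hf x ∈ W.1 := by
        intro m
        induction m with
        | zero =>
          intro x _ h2
          have hx : ∀ j, ∃ u ∈ S, x j ∈ (u j).1 := by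
            intro j
            have := h2 j (Nat.zero_le _)
            rw [hT] at this
            simpa using this
          have hub : ∀ k : ℕ, ∃ u ∈ S, ∀ j : Fin n, (j : ℕ) < k → x j ∈ (u j).1 := by
            intro k
            induction k with
            | zero =>
              obtain ⟨u, hu⟩ := hSne
              exact ⟨u, hu, fun j hj => absurd hj (Nat.not_lt_zero _)⟩
            | succ k ih =>
              obtain ⟨u, huS, hu⟩ := ih
              by_cases hk : k < n
              · obtain ⟨v, hvS, hv⟩ := hx ⟨k, hk⟩
                obtain ⟨w, hwS, huw, hvw⟩ := hSdir u huS v hvS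
                refine ⟨w, hwS, fun j hj => ?_⟩
                rcases Nat.lt_or_ge (j : ℕ) k with h | h
                · exact (huw j) (hu j h)
                · have hjk : j = (⟨k, hk⟩ : Fin n) :=
                    Fin.ext (Nat.le_antisymm (Nat.lt_succ_iff.mp hj) h)
                  rw [hjk]
                  exact (hvw ⟨k, hk⟩) hv
              · exact ⟨u, huS, fun j hj =>
                  hu j (lt_of_lt_of_le j.isLt (Nat.le_of_not_lt hk))⟩
          obtain ⟨u, huS, hu⟩ := hub n
          have hmem : liftF f hf x ∈ (liftBar f hf u).1 :=
            subset_genC _ _ ⟨x, fun j => hu j j.isLt, rfl⟩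
          exact (le_sSup (Set.mem_image_of_mem _ huS) : liftBar f hf u ≤ W) hmem
        | succ m ih =>
          intro x h1 h2
          by_cases hm : m < n
          · set k : Fin n := ⟨m, hm⟩ with hk
            set G : Set (FComp (A k)) :=
              {y | liftF f hf (Function.update x k y) ∈ W.1} with hG
            have hGideal : IsCIdeal (covD (A := A k)) G := by
              constructor
              · intro y hy y' hy'
                exact W.2.1 _ hy _
                  (liftF_mono f hf (update_le_update' (fun i _ => le_refl _) hy'))
              · intro y0 U hcov hUG
                have hstab := covD_liftF f hf hop x k hcov
                exact W.2.2 _ _ hstab (by rintro _ ⟨u', hu', rfl⟩; exact hUG hu')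
            have hTG : T k ⊆ G := by
              intro y hy
              refine ih (Function.update x k y) ?_ ?_
              · intro j hj
                have hjk : j ≠ k := by
                  intro h
                  rw [h] at hj
                  exact absurd hj (lt_irrefl m)
                rw [Function.update_of_ne hjk]
                exact h1 j (Nat.lt_succ_of_lt hj)
              · intro j hj
                rcases eq_or_ne j k with rfl | hjk
                · rw [Function.update_self]
                  exact hy
                · rw [Function.update_of_ne hjk]
                  apply h2 j
                  rcases Nat.lt_or_ge (j : ℕ) (m + 1) with h | h
                  · exact absurd (Fin.ext (Nat.le_antisymm (Nat.lt_succ_iff.mp h) hj)) hjk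
                  · exact h
            have hxk : x k ∈ genC (covD (A := A k)) (T k) := by
              rw [← hTsup k]
              exact h1 k (Nat.lt_succ_self m)
            have hxG : x k ∈ G := genC_min hGideal hTG hxk
            rw [hG, Set.mem_setOf_eq, Function.update_eq_self] at hxG
            exact hxG
          · apply ih x
            · intro j hj
              exact h1 j (Nat.lt_succ_of_lt hj)
            · intro j hj
              exact absurd (lt_of_lt_of_le j.isLt (Nat.le_of_not_lt hm)) (Nat.not_lt.mpr hj)
      show (liftBar f hf (sSup S)).1 ⊆ W.1
      apply genC_min W.2
      rintro b ⟨x, hx, rfl⟩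
      exact key n x (fun j _ => hx j) (fun j hj => absurd j.isLt (Nat.not_lt.mpr hj))
    · apply sSup_le
      rintro w ⟨u, hu, rfl⟩
      exact liftBar_mono f hf (le_sSup hu)
  · funext u
    have hinf : ∀ (x : ∀ i, FComp (A i)) (w : FComp B),
        w ∈ (sInf {z | ∃ a : ∀ i, A i, (∀ i, x i ≤ pf (a i)) ∧
          z = etaC (covD (A := B)) (pf (f a))}).1 ↔ w ≤ liftF f hf x := by
      intro x w
      rw [cidl_mem_sInf]
      constructor
      · intro h
        apply le_liftF f hf
        intro a ha
        have h3 : w ∈ (etaC (covD (A := B)) (pf (f a))).1 :=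
          h _ ⟨a, fun i => le_pf_iff.mpr (ha i), rfl⟩
        rw [etaC_coe] at h3
        exact h3
      · intro h z hz
        obtain ⟨a, ha, rfl⟩ := hz
        rw [etaC_coe]
        exact le_trans h (liftF_le_pf f hf (fun i => le_pf_iff.mp (ha i)))
    apply le_antisymm
    · show (liftBar f hf u).1 ⊆ (fsigma f u).1
      apply genC_min (fsigma f u).2
      rintro b ⟨x, hx, rfl⟩
      have h1 : liftF f hf x ∈ (sInf {z | ∃ a : ∀ i, A i, (∀ i, x i ≤ pf (a i)) ∧
          z = etaC (covD (A := B)) (pf (f a))}).1 :=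
        (hinf x _).mpr (le_refl _)
      refine (le_sSup ⟨x, fun i => etaC_le_iff.mpr (hx i), rfl⟩ :
        _ ≤ fsigma f u) h1
    · show fsigma f u ≤ liftBar f hf u
      refine sSup_le ?_
      rintro w ⟨x, hx, rfl⟩
      intro b hb
      have hb := (hinf x b).mp hb
      have hmem : liftF f hf x ∈ (liftBar f hf u).1 :=
        subset_genC _ _ ⟨x, fun i => etaC_le_iff.mp (hx i), rfl⟩
      exact (liftBar f hf u).2.1 _ hmem _ hb
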